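/- Let a, b, k > 0, y > 0 and z > 0, and for ε > 0 define h(y,z,ε) = (yz/k + (y − z(a+y²))/(2ε) + ky²/(2ε²)) · (1 − √(1 + 4ε²ky(εby + z(2εz(a+y²) − y(ky + ε(2+a+y²))))/(ky(ky+ε) + εz(2εy − k(a+y²)))²)). Then, as ε → 0 from the right, h(y,z,ε) tends to h₀(y,z) = yz/k, and (h(y,z,ε) − h₀(y,z))/ε tends to h₁(y,z) = (z−b)/k² + z(a+y²)(y−z)/(k²y). -/

import Mathlib

set_option maxHeartbeats 4000000

open Filter Topology

/-- Explicit SIM approximation of the 3D Sel'kov slow subsystem obtained by the CSP method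
with one iteration. -/
noncomputable def SelkovCsp (a b k : ℝ) (y z ε : ℝ) : ℝ :=
  (y * z / k + (y - z * (a + y ^ 2)) / (2 * ε) + k * y ^ 2 / (2 * ε ^ 2)) *
    (1 - Real.sqrt (1 + 4 * ε ^ 2 * k * y *
      (ε * b * y + z * (2 * ε * z * (a + y ^ 2) - y * (k * y + ε * (2 + a + y ^ 2)))) /
      (k * y * (k * y + ε) + ε * z * (2 * ε * y - k * (a + y ^ 2))) ^ 2))

/-- As `ε → 0⁺`, the CSP one-iteration SIM approximation of the 3D Sel'kov system tends to
`h₀(y,z) = yz/k` and its first-order correction tends to `h₁(y,z)`. -/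
theorem selkov_csp_taylor_expansion (a b k y z : ℝ)
    (ha : 0 < a) (hb : 0 < b) (hk : 0 < k) (hy : 0 < y) (hz : 0 < z) :
    Tendsto (fun ε : ℝ => SelkovCsp a b k y z ε) (𝓝[>] 0) (𝓝 (y * z / k)) ∧
    Tendsto (fun ε : ℝ => (SelkovCsp a b k y z ε - y * z / k) / ε) (𝓝[>] 0)
      (𝓝 ((z - b) / k ^ 2 + z * (a + y ^ 2) * (y - z) / (k ^ 2 * y))) := by
  have hk' : k ≠ 0 := hk.ne'
  have hy' : y ≠ 0 := hy.ne'
  -- D tends to k²y²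
  have hDt : Tendsto (fun ε : ℝ => (k*y*(k*y+ε) + ε*z*(2*ε*y - k*(a+y^2)))) (𝓝 0) (𝓝 (k^2*y^2)) := by
    have hc : Tendsto (fun ε : ℝ => (k*y*(k*y+ε) + ε*z*(2*ε*y - k*(a+y^2)))) (𝓝 0) (𝓝 ((k*y*(k*y+(0:ℝ)) + (0:ℝ)*z*(2*(0:ℝ)*y - k*(a+y^2))))) :=
      (by fun_prop : Continuous fun ε : ℝ => (k*y*(k*y+ε) + ε*z*(2*ε*y - k*(a+y^2)))).tendsto 0
    rw [(by ring : (k*y*(k*y+(0:ℝ)) + (0:ℝ)*z*(2*(0:ℝ)*y - k*(a+y^2))) = k^2*y^2)] at hc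
    exact hc
  have hDev : ∀ᶠ ε in 𝓝[>] (0:ℝ), 0 < (k*y*(k*y+ε) + ε*z*(2*ε*y - k*(a+y^2))) :=
    (hDt.mono_left nhdsWithin_le_nhds).eventually (eventually_gt_nhds (by positivity))
  -- the sqrt argument tends to 1
  have hQt : Tendsto (fun ε : ℝ => (1 + 4*ε^2*k*y*(ε*b*y + z*(2*ε*z*(a+y^2) - y*(k*y + ε*(2+a+y^2))))/(k*y*(k*y+ε) + ε*z*(2*ε*y - k*(a+y^2)))^2)) (𝓝 0) (𝓝 1) := by
    have hnum : Tendsto (fun ε : ℝ => 4*ε^2*k*y*(ε*b*y + z*(2*ε*z*(a+y^2) - y*(k*y + ε*(2+a+y^2))))) (𝓝 0) (𝓝 0) := by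
      have hc : Tendsto (fun ε : ℝ => 4*ε^2*k*y*(ε*b*y + z*(2*ε*z*(a+y^2) - y*(k*y + ε*(2+a+y^2))))) (𝓝 0) (𝓝 (4*(0:ℝ)^2*k*y*((0:ℝ)*b*y + z*(2*(0:ℝ)*z*(a+y^2) - y*(k*y + (0:ℝ)*(2+a+y^2)))))) :=
        (by fun_prop : Continuous fun ε : ℝ => 4*ε^2*k*y*(ε*b*y + z*(2*ε*z*(a+y^2) - y*(k*y + ε*(2+a+y^2))))).tendsto 0
      rw [(by ring : 4*(0:ℝ)^2*k*y*((0:ℝ)*b*y + z*(2*(0:ℝ)*z*(a+y^2) - y*(k*y + (0:ℝ)*(2+a+y^2)))) = 0)] at hc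
      exact hc
    have h : Tendsto (fun ε : ℝ => 4*ε^2*k*y*(ε*b*y + z*(2*ε*z*(a+y^2) - y*(k*y + ε*(2+a+y^2))))/(k*y*(k*y+ε) + ε*z*(2*ε*y - k*(a+y^2)))^2) (𝓝 0)
        (𝓝 (0/(k^2*y^2)^2)) := hnum.div (hDt.pow 2) (by positivity : ((k^2*y^2)^2 : ℝ) ≠ 0)
    have h2 : Tendsto (fun ε : ℝ => (1 + 4*ε^2*k*y*(ε*b*y + z*(2*ε*z*(a+y^2) - y*(k*y + ε*(2+a+y^2))))/(k*y*(k*y+ε) + ε*z*(2*ε*y - k*(a+y^2)))^2)) (𝓝 0) (𝓝 (1 + 0/(k^2*y^2)^2)) :=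
      tendsto_const_nhds.add h
    rw [(by norm_num : (1:ℝ) + 0/(k^2*y^2)^2 = 1)] at h2
    exact h2
  have hQev : ∀ᶠ ε in 𝓝[>] (0:ℝ), 0 < (1 + 4*ε^2*k*y*(ε*b*y + z*(2*ε*z*(a+y^2) - y*(k*y + ε*(2+a+y^2))))/(k*y*(k*y+ε) + ε*z*(2*ε*y - k*(a+y^2)))^2) :=
    (hQt.mono_left nhdsWithin_le_nhds).eventually (eventually_gt_nhds one_pos)
  -- sqrt tends to 1
  have hst : Tendsto (fun ε : ℝ => Real.sqrt (1 + 4*ε^2*k*y*(ε*b*y + z*(2*ε*z*(a+y^2) - y*(k*y + ε*(2+a+y^2))))/(k*y*(k*y+ε) + ε*z*(2*ε*y - k*(a+y^2)))^2)) (𝓝 0) (𝓝 1) := by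
    have h := (Real.continuous_sqrt.tendsto 1).comp hQt
    rw [Real.sqrt_one] at h
    exact h
  -- limit of F
  have hFt : Tendsto (fun ε : ℝ => (-(2*y*(ε*b*y + z*(2*ε*z*(a+y^2) - y*(k*y + ε*(2+a+y^2))))*(2*ε^2*y*z + ε*k*(y - z*(a+y^2)) + k^2*y^2))/((k*y*(k*y+ε) + ε*z*(2*ε*y - k*(a+y^2)))^2*(1+Real.sqrt (1 + 4*ε^2*k*y*(ε*b*y + z*(2*ε*z*(a+y^2) - y*(k*y + ε*(2+a+y^2))))/(k*y*(k*y+ε) + ε*z*(2*ε*y - k*(a+y^2)))^2))))) (𝓝[>] 0) (𝓝 (y*z/k)) := by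
    have hnum : Tendsto (fun ε : ℝ => -(2*y*(ε*b*y + z*(2*ε*z*(a+y^2) - y*(k*y + ε*(2+a+y^2))))*(2*ε^2*y*z + ε*k*(y - z*(a+y^2)) + k^2*y^2))) (𝓝 0) (𝓝 (2*k^3*y^5*z)) := by
      have hc : Tendsto (fun ε : ℝ => -(2*y*(ε*b*y + z*(2*ε*z*(a+y^2) - y*(k*y + ε*(2+a+y^2))))*(2*ε^2*y*z + ε*k*(y - z*(a+y^2)) + k^2*y^2))) (𝓝 0)
          (𝓝 (-(2*y*((0:ℝ)*b*y + z*(2*(0:ℝ)*z*(a+y^2) - y*(k*y + (0:ℝ)*(2+a+y^2))))*(2*(0:ℝ)^2*y*z + (0:ℝ)*k*(y - z*(a+y^2)) + k^2*y^2)))) :=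
        (by fun_prop : Continuous fun ε : ℝ => -(2*y*(ε*b*y + z*(2*ε*z*(a+y^2) - y*(k*y + ε*(2+a+y^2))))*(2*ε^2*y*z + ε*k*(y - z*(a+y^2)) + k^2*y^2))).tendsto 0
      rw [(by ring : -(2*y*((0:ℝ)*b*y + z*(2*(0:ℝ)*z*(a+y^2) - y*(k*y + (0:ℝ)*(2+a+y^2))))*(2*(0:ℝ)^2*y*z + (0:ℝ)*k*(y - z*(a+y^2)) + k^2*y^2)) = 2*k^3*y^5*z)] at hc
      exact hc
    have hden : Tendsto (fun ε : ℝ => (k*y*(k*y+ε) + ε*z*(2*ε*y - k*(a+y^2)))^2*(1+Real.sqrt (1 + 4*ε^2*k*y*(ε*b*y + z*(2*ε*z*(a+y^2) - y*(k*y + ε*(2+a+y^2))))/(k*y*(k*y+ε) + ε*z*(2*ε*y - k*(a+y^2)))^2))) (𝓝 0)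
        (𝓝 ((k^2*y^2)^2*(1+1))) := (hDt.pow 2).mul (tendsto_const_nhds.add hst)
    have h := (hnum.div hden (by positivity : ((k^2*y^2)^2*(1+1) : ℝ) ≠ 0)).mono_left
      (nhdsWithin_le_nhds : 𝓝[>] (0:ℝ) ≤ 𝓝 0)
    have hval : (2*k^3*y^5*z)/((k^2*y^2)^2*(1+1)) = y*z/k := by field_simp; ring
    rw [hval] at h
    exact h
  -- limit of G
  have hGt : Tendsto (fun ε : ℝ => ((((2*k^3*y^4*z - 2*k^3*y^5*z^2 + 2*k^3*y^6*z - 2*b*k^3*y^4 - 2*a*k^3*y^3*z^2 + 2*a*k^3*y^4*z) + ε*(2*k^2*y^3*z - 8*k^2*y^4*z^2 + 2*k^2*y^5*z + 2*k^2*y^5*z^3 - 2*k^2*y^6*z^2 - 2*b*k^2*y^3 + 2*b*k^2*y^4*z - 4*a*k^2*y^2*z^2 + 2*a*k^2*y^3*z + 4*a*k^2*y^3*z^3 - 4*a*k^2*y^4*z^2 + 2*a*b*k^2*y^2*z + 2*a^2*k^2*y*z^3 - 2*a^2*k^2*y^2*z^2) + ε^2*(4*k*y^5*z^2 - 4*b*k*y^3*z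 + 4*a*k*y^3*z^2) + ε^3*(-(8*y^3*z^3)))*(1+Real.sqrt (1 + 4*ε^2*k*y*(ε*b*y + z*(2*ε*z*(a+y^2) - y*(k*y + ε*(2+a+y^2))))/(k*y*(k*y+ε) + ε*z*(2*ε*y - k*(a+y^2)))^2)) - 4*ε*k*y*(ε*b*y + z*(2*ε*z*(a+y^2) - y*(k*y + ε*(2+a+y^2))))*(y*z))/(k*(k*y*(k*y+ε) + ε*z*(2*ε*y - k*(a+y^2)))^2*(1+Real.sqrt (1 + 4*ε^2*k*y*(ε*b*y + z*(2*ε*z*(a+y^2) - y*(k*y + ε*(2+a+y^2))))/(k*y*(k*y+ε) + ε*z*(2*ε*y - k*(a+y^2)))^2))^2))) (𝓝[>] 0)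
      (𝓝 ((z - b) / k ^ 2 + z * (a + y ^ 2) * (y - z) / (k ^ 2 * y))) := by
    have hB2 : Tendsto (fun ε : ℝ => ((2*k^3*y^4*z - 2*k^3*y^5*z^2 + 2*k^3*y^6*z - 2*b*k^3*y^4 - 2*a*k^3*y^3*z^2 + 2*a*k^3*y^4*z) + ε*(2*k^2*y^3*z - 8*k^2*y^4*z^2 + 2*k^2*y^5*z + 2*k^2*y^5*z^3 - 2*k^2*y^6*z^2 - 2*b*k^2*y^3 + 2*b*k^2*y^4*z - 4*a*k^2*y^2*z^2 + 2*a*k^2*y^3*z + 4*a*k^2*y^3*z^3 - 4*a*k^2*y^4*z^2 + 2*a*b*k^2*y^2*z + 2*a^2*k^2*y*z^3 - 2*a^2*k^2*y^2*z^2) + ε^2*(4*k*y^5*z^2 - 4*b*k*y^3*z + 4*a*k*y^3*z^2) + ε^3*(-(8*y^3*z^3)))) (𝓝 0) (𝓝 (2*k^3*y^4*z - 2*k^3*y^5*z^2 + 2*k^3*y^6*z - 2*b*k^3*y^4 - 2*a*k^3*y^3*z^2 + 2*a*k^3*y^4*z)) := by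
      have hc : Tendsto (fun ε : ℝ => ((2*k^3*y^4*z - 2*k^3*y^5*z^2 + 2*k^3*y^6*z - 2*b*k^3*y^4 - 2*a*k^3*y^3*z^2 + 2*a*k^3*y^4*z) + ε*(2*k^2*y^3*z - 8*k^2*y^4*z^2 + 2*k^2*y^5*z + 2*k^2*y^5*z^3 - 2*k^2*y^6*z^2 - 2*b*k^2*y^3 + 2*b*k^2*y^4*z - 4*a*k^2*y^2*z^2 + 2*a*k^2*y^3*z + 4*a*k^2*y^3*z^3 - 4*a*k^2*y^4*z^2 + 2*a*b*k^2*y^2*z + 2*a^2*k^2*y*z^3 - 2*a^2*k^2*y^2*z^2) + ε^2*(4*k*y^5*z^2 - 4*b*k*y^3*z + 4*a*k*y^3*z^2) + ε^3*(-(8*y^3*z^3)))) (𝓝 0) (𝓝 (((2*k^3*y^4*z - 2*k^3*y^5*z^2 + 2*k^3*y^6*z - 2*b*k^3*y^4 - 2*a*k^3*y^3*z^2 + 2*a*k^3*y^4*z) + (0:ℝ)*(2*k^2*y^3*z - 8*k^2*y^4*z^2 + 2*k^2*y^5*z + 2*k^2*y^5*z^3 - 2*k^2*y^6*z^2 - 2*b*k^2*y^3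 + 2*b*k^2*y^4*z - 4*a*k^2*y^2*z^2 + 2*a*k^2*y^3*z + 4*a*k^2*y^3*z^3 - 4*a*k^2*y^4*z^2 + 2*a*b*k^2*y^2*z + 2*a^2*k^2*y*z^3 - 2*a^2*k^2*y^2*z^2) + (0:ℝ)^2*(4*k*y^5*z^2 - 4*b*k*y^3*z + 4*a*k*y^3*z^2) + (0:ℝ)^3*(-(8*y^3*z^3))))) :=
        (by fun_prop : Continuous fun ε : ℝ => ((2*k^3*y^4*z - 2*k^3*y^5*z^2 + 2*k^3*y^6*z - 2*b*k^3*y^4 - 2*a*k^3*y^3*z^2 + 2*a*k^3*y^4*z) + ε*(2*k^2*y^3*z - 8*k^2*y^4*z^2 + 2*k^2*y^5*z + 2*k^2*y^5*z^3 - 2*k^2*y^6*z^2 - 2*b*k^2*y^3 + 2*b*k^2*y^4*z - 4*a*k^2*y^2*z^2 + 2*a*k^2*y^3*z + 4*a*k^2*y^3*z^3 - 4*a*k^2*y^4*z^2 + 2*a*b*k^2*y^2*z + 2*a^2*k^2*y*z^3 - 2*a^2*k^2*y^2*z^2) + ε^2*(4*k*y^5*z^2 - 4*b*k*y^3*z +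 4*a*k*y^3*z^2) + ε^3*(-(8*y^3*z^3)))).tendsto 0
      rw [(by ring : ((2*k^3*y^4*z - 2*k^3*y^5*z^2 + 2*k^3*y^6*z - 2*b*k^3*y^4 - 2*a*k^3*y^3*z^2 + 2*a*k^3*y^4*z) + (0:ℝ)*(2*k^2*y^3*z - 8*k^2*y^4*z^2 + 2*k^2*y^5*z + 2*k^2*y^5*z^3 - 2*k^2*y^6*z^2 - 2*b*k^2*y^3 + 2*b*k^2*y^4*z - 4*a*k^2*y^2*z^2 + 2*a*k^2*y^3*z + 4*a*k^2*y^3*z^3 - 4*a*k^2*y^4*z^2 + 2*a*b*k^2*y^2*z + 2*a^2*k^2*y*z^3 - 2*a^2*k^2*y^2*z^2) + (0:ℝ)^2*(4*k*y^5*z^2 - 4*b*k*y^3*z + 4*a*k*y^3*z^2) + (0:ℝ)^3*(-(8*y^3*z^3))) = (2*k^3*y^4*z - 2*k^3*y^5*z^2 + 2*k^3*y^6*z - 2*b*k^3*y^4 - 2*a*k^3*y^3*z^2 + 2*a*k^3*y^4*z))] at hc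
      exact hc
    have h4 : Tendsto (fun ε : ℝ => 4*ε*k*y*(ε*b*y + z*(2*ε*z*(a+y^2) - y*(k*y + ε*(2+a+y^2))))*(y*z)) (𝓝 0) (𝓝 0) := by
      have hc : Tendsto (fun ε : ℝ => 4*ε*k*y*(ε*b*y + z*(2*ε*z*(a+y^2) - y*(k*y + ε*(2+a+y^2))))*(y*z)) (𝓝 0)
          (𝓝 (4*(0:ℝ)*k*y*((0:ℝ)*b*y + z*(2*(0:ℝ)*z*(a+y^2) - y*(k*y + (0:ℝ)*(2+a+y^2))))*(y*z))) :=
        (by fun_prop : Continuous fun ε : ℝ => 4*ε*k*y*(ε*b*y + z*(2*ε*z*(a+y^2) - y*(k*y + ε*(2+a+y^2))))*(y*z)).tendsto 0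
      rw [(by ring : 4*(0:ℝ)*k*y*((0:ℝ)*b*y + z*(2*(0:ℝ)*z*(a+y^2) - y*(k*y + (0:ℝ)*(2+a+y^2))))*(y*z) = 0)] at hc
      exact hc
    have hnum : Tendsto (fun ε : ℝ => ((2*k^3*y^4*z - 2*k^3*y^5*z^2 + 2*k^3*y^6*z - 2*b*k^3*y^4 - 2*a*k^3*y^3*z^2 + 2*a*k^3*y^4*z) + ε*(2*k^2*y^3*z - 8*k^2*y^4*z^2 + 2*k^2*y^5*z + 2*k^2*y^5*z^3 - 2*k^2*y^6*z^2 - 2*b*k^2*y^3 + 2*b*k^2*y^4*z - 4*a*k^2*y^2*z^2 + 2*a*k^2*y^3*z + 4*a*k^2*y^3*z^3 - 4*a*k^2*y^4*z^2 + 2*a*b*k^2*y^2*z + 2*a^2*k^2*y*z^3 - 2*a^2*k^2*y^2*z^2) + ε^2*(4*k*y^5*z^2 - 4*b*k*y^3*z + 4*a*k*y^3*z^2) + ε^3*(-(8*y^3*z^3)))*(1+Real.sqrt (1 + 4*ε^2*k*y*(ε*b*y + z*(2*ε*z*(a+y^2) - y*(k*y + ε*(2+a+y^2))))/(k*y*(k*y+ε)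 + ε*z*(2*ε*y - k*(a+y^2)))^2)) - 4*ε*k*y*(ε*b*y + z*(2*ε*z*(a+y^2) - y*(k*y + ε*(2+a+y^2))))*(y*z))
        (𝓝 0) (𝓝 ((2*k^3*y^4*z - 2*k^3*y^5*z^2 + 2*k^3*y^6*z - 2*b*k^3*y^4 - 2*a*k^3*y^3*z^2 + 2*a*k^3*y^4*z)*(1+1) - 0)) := (hB2.mul (tendsto_const_nhds.add hst)).sub h4
    have hden : Tendsto (fun ε : ℝ => k*(k*y*(k*y+ε) + ε*z*(2*ε*y - k*(a+y^2)))^2*(1+Real.sqrt (1 + 4*ε^2*k*y*(ε*b*y + z*(2*ε*z*(a+y^2) - y*(k*y + ε*(2+a+y^2))))/(k*y*(k*y+ε) + ε*z*(2*ε*y - k*(a+y^2)))^2))^2) (𝓝 0)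
        (𝓝 (k*(k^2*y^2)^2*(1+1)^2)) :=
      (tendsto_const_nhds.mul (hDt.pow 2)).mul ((tendsto_const_nhds.add hst).pow 2)
    have h := (hnum.div hden (by positivity : (k*(k^2*y^2)^2*(1+1)^2 : ℝ) ≠ 0)).mono_left
      (nhdsWithin_le_nhds : 𝓝[>] (0:ℝ) ≤ 𝓝 0)
    have hval : ((2*k^3*y^4*z - 2*k^3*y^5*z^2 + 2*k^3*y^6*z - 2*b*k^3*y^4 - 2*a*k^3*y^3*z^2 + 2*a*k^3*y^4*z)*(1+1) - 0)/(k*(k^2*y^2)^2*(1+1)^2)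
        = (z - b) / k ^ 2 + z * (a + y ^ 2) * (y - z) / (k ^ 2 * y) := by field_simp; ring
    rw [hval] at h
    exact h
  -- eventual equalities
  have hev : ∀ᶠ ε in 𝓝[>] (0:ℝ), SelkovCsp a b k y z ε = (-(2*y*(ε*b*y + z*(2*ε*z*(a+y^2) - y*(k*y + ε*(2+a+y^2))))*(2*ε^2*y*z + ε*k*(y - z*(a+y^2)) + k^2*y^2))/((k*y*(k*y+ε) + ε*z*(2*ε*y - k*(a+y^2)))^2*(1+Real.sqrt (1 + 4*ε^2*k*y*(ε*b*y + z*(2*ε*z*(a+y^2) - y*(k*y + ε*(2+a+y^2))))/(k*y*(k*y+ε) + ε*z*(2*ε*y - k*(a+y^2)))^2)))) ∧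
      (SelkovCsp a b k y z ε - y * z / k) / ε = ((((2*k^3*y^4*z - 2*k^3*y^5*z^2 + 2*k^3*y^6*z - 2*b*k^3*y^4 - 2*a*k^3*y^3*z^2 + 2*a*k^3*y^4*z) + ε*(2*k^2*y^3*z - 8*k^2*y^4*z^2 + 2*k^2*y^5*z + 2*k^2*y^5*z^3 - 2*k^2*y^6*z^2 - 2*b*k^2*y^3 + 2*b*k^2*y^4*z - 4*a*k^2*y^2*z^2 + 2*a*k^2*y^3*z + 4*a*k^2*y^3*z^3 - 4*a*k^2*y^4*z^2 + 2*a*b*k^2*y^2*z + 2*a^2*k^2*y*z^3 - 2*a^2*k^2*y^2*z^2) + ε^2*(4*k*y^5*z^2 - 4*b*k*y^3*z + 4*a*k*y^3*z^2) + ε^3*(-(8*y^3*z^3)))*(1+Real.sqrt (1 + 4*ε^2*k*y*(ε*b*y + z*(2*ε*z*(a+y^2) - y*(k*y + ε*(2+a+y^2))))/(k*y*(k*y+ε) + ε*z*(2*ε*y - k*(a+y^2)))^2)) - 4*ε*k*y*(ε*b*y + z*(2*ε*z*(a+y^2) - y*(k*y + ε*(2+a+y^2))))*(y*z))/(k*(k*y*(k*y+ε)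 + ε*z*(2*ε*y - k*(a+y^2)))^2*(1+Real.sqrt (1 + 4*ε^2*k*y*(ε*b*y + z*(2*ε*z*(a+y^2) - y*(k*y + ε*(2+a+y^2))))/(k*y*(k*y+ε) + ε*z*(2*ε*y - k*(a+y^2)))^2))^2)) := by
    filter_upwards [hDev, hQev, self_mem_nhdsWithin] with ε hD hQ hε
    have hε' : (ε:ℝ) ≠ 0 := ne_of_gt hε
    have hD' : (k*y*(k*y+ε) + ε*z*(2*ε*y - k*(a+y^2))) ≠ 0 := ne_of_gt hD
    set sv := Real.sqrt (1 + 4*ε^2*k*y*(ε*b*y + z*(2*ε*z*(a+y^2) - y*(k*y + ε*(2+a+y^2))))/(k*y*(k*y+ε) + ε*z*(2*ε*y - k*(a+y^2)))^2) with hsdef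
    have hsnn : 0 ≤ sv := Real.sqrt_nonneg _
    have h1s : (0:ℝ) < 1 + sv := by positivity
    have hsq : sv^2 = (1 + 4*ε^2*k*y*(ε*b*y + z*(2*ε*z*(a+y^2) - y*(k*y + ε*(2+a+y^2))))/(k*y*(k*y+ε) + ε*z*(2*ε*y - k*(a+y^2)))^2) := Real.sq_sqrt hQ.le
    have hs2 : sv^2*(k*y*(k*y+ε) + ε*z*(2*ε*y - k*(a+y^2)))^2 = (k*y*(k*y+ε) + ε*z*(2*ε*y - k*(a+y^2)))^2 + 4*ε^2*k*y*(ε*b*y + z*(2*ε*z*(a+y^2) - y*(k*y + ε*(2+a+y^2)))) := by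
      rw [hsq, add_mul, one_mul, div_mul_cancel₀ _ (pow_ne_zero 2 hD')]
    have hden1 : (k*y*(k*y+ε) + ε*z*(2*ε*y - k*(a+y^2)))^2*(1+sv) ≠ 0 := by positivity
    have hmain : SelkovCsp a b k y z ε = (-(2*y*(ε*b*y + z*(2*ε*z*(a+y^2) - y*(k*y + ε*(2+a+y^2))))*(2*ε^2*y*z + ε*k*(y - z*(a+y^2)) + k^2*y^2))/((k*y*(k*y+ε) + ε*z*(2*ε*y - k*(a+y^2)))^2*(1+sv))) := by
      show (y * z / k + (y - z * (a + y ^ 2)) / (2 * ε) + k * y ^ 2 / (2 * ε ^ 2)) * (1 - sv)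
        = (-(2*y*(ε*b*y + z*(2*ε*z*(a+y^2) - y*(k*y + ε*(2+a+y^2))))*(2*ε^2*y*z + ε*k*(y - z*(a+y^2)) + k^2*y^2))/((k*y*(k*y+ε) + ε*z*(2*ε*y - k*(a+y^2)))^2*(1+sv)))
      have hP : (y * z / k + (y - z * (a + y ^ 2)) / (2 * ε) + k * y ^ 2 / (2 * ε ^ 2))
          = (2*ε^2*y*z + ε*k*(y - z*(a+y^2)) + k^2*y^2)/(2*k*ε^2) := by field_simp
      rw [hP, div_mul_eq_mul_div, div_eq_div_iff (by positivity) hden1]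
      linear_combination (-(2*ε^2*y*z + ε*k*(y - z*(a+y^2)) + k^2*y^2)) * hs2
    refine ⟨hmain, ?_⟩
    rw [hmain]
    rw [div_sub_div _ _ hden1 hk', div_div,
      div_eq_div_iff (by positivity) (by positivity)]
    linear_combination (-(y*z)*(k*(k*y*(k*y+ε) + ε*z*(2*ε*y - k*(a+y^2)))^2*(1+sv))) * hs2
  constructor
  · exact Tendsto.congr' (hev.mono fun ε h => h.1.symm) hFt
  · exact Tendsto.congr' (hev.mono fun ε h => h.2.symm) hGt
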